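/- Let J_-, J_+ ⊆ ℤ be finite sets each with at least two elements. If the Minkowski sum satisfies |J_- + J_+| < |J_-| + |J_+|, then J_- and J_+ are both arithmetic progressions with the same common difference (and then |J_- + J_+| = |J_-| + |J_+| - 1). -/

import Mathlib

open scoped Pointwise

/-- The finite arithmetic progression `{a, a+m, ..., a+(k-1)m}` in `ℤ`. -/
def AP (a m : ℤ) (k : ℕ) : Finset ℤ := (Finset.range k).image (fun i : ℕ => a + (i : ℤ) * m)

namespace FreimanAux

lemma strictMono_of_lt_succ {n : ℕ} {f : Fin n → ℤ}
    (h : ∀ t, ∀ ht : t + 1 < n, f ⟨t, Nat.lt_of_succ_lt ht⟩ < f ⟨t + 1, ht⟩) :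
    StrictMono f := by
  have key : ∀ d s, ∀ hs : s + d < n, 0 < d → f ⟨s, by omega⟩ < f ⟨s + d, hs⟩ := by
    intro d
    induction d with
    | zero => intro s hs h0; omega
    | succ d ih =>
      intro s hs _
      rcases Nat.eq_zero_or_pos d with h0 | h0
      · subst h0
        exact h s hs
      · have h1 := ih s (by omega) h0
        have h2 := h (s + d) (by omega)
        calc f ⟨s, by omega⟩ < f ⟨s + d, by omega⟩ := h1
          _ < f ⟨s + d + 1, by omega⟩ := h2
          _ = f ⟨s + (d + 1), hs⟩ := by congr 1 <;> omega
  intro a b hab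
  obtain ⟨s, hs⟩ := a; obtain ⟨t, ht⟩ := b
  have hst : s < t := hab
  have h3 := key (t - s) s (by omega) (by omega)
  have he : (⟨s + (t - s), by omega⟩ : Fin n) = ⟨t, ht⟩ := by
    apply Fin.ext; simp; omega
  rwa [he] at h3

/-- clamped increasing enumeration of a finite set of integers -/
noncomputable def enum (A : Finset ℤ) (i : ℕ) : ℤ :=
  if h : A.Nonempty then
    A.orderEmbOfFin rfl ⟨min i (A.card - 1), by
      have := Finset.card_pos.mpr h; omega⟩
  else 0

lemma enum_mem (A : Finset ℤ) (hA : A.Nonempty) (i : ℕ) : enum A i ∈ A := by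
  rw [enum, dif_pos hA]; exact Finset.orderEmbOfFin_mem A rfl _

lemma enum_lt (A : Finset ℤ) {i j : ℕ} (hij : i < j) (hj : j ≤ A.card - 1) :
    enum A i < enum A j := by
  have hA : A.Nonempty := Finset.card_pos.mp (by omega)
  rw [enum, dif_pos hA, enum, dif_pos hA]
  apply (A.orderEmbOfFin rfl).strictMono
  rw [Fin.mk_lt_mk]
  omega

lemma enum_surj (A : Finset ℤ) (hA : A.Nonempty) {x : ℤ} (hx : x ∈ A) :
    ∃ i ≤ A.card - 1, enum A i = x := by
  have hr := A.range_orderEmbOfFin (rfl : A.card = A.card)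
  have : x ∈ Set.range (A.orderEmbOfFin rfl) := by rw [hr]; exact hx
  obtain ⟨i, hi⟩ := this
  refine ⟨i.val, by omega, ?_⟩
  rw [enum, dif_pos hA]
  convert hi using 2
  apply Fin.ext; simp; omega

/-- the `j`-th increasing chain through `A + B` -/
noncomputable def chain (A B : Finset ℤ) (j : ℕ) (t : ℕ) : ℤ :=
  if t ≤ j then enum A t + enum B 0
  else if t ≤ A.card then enum A (t - 1) + enum B 1
  else enum A (A.card - 1) + enum B (t - A.card + 1)

lemma chain_mem (A B : Finset ℤ) (hA : A.Nonempty) (hB : B.Nonempty) (j t : ℕ) :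
    chain A B j t ∈ A + B := by
  unfold chain
  split_ifs <;> exact Finset.add_mem_add (enum_mem A hA _) (enum_mem B hB _)

lemma chain_lt (A B : Finset ℤ) (h1 : 2 ≤ A.card) (h2 : 2 ≤ B.card) {j t : ℕ}
    (hj : j ≤ A.card - 1) (ht : t + 1 < A.card + B.card - 1) :
    chain A B j t < chain A B j (t + 1) := by
  unfold chain
  split_ifs with p1 p2 p3 p4 p5 p6 p7 p8 p9
  · exact add_lt_add_left (enum_lt A (by omega) (by omega)) _
  · have e1 : t + 1 - 1 = t := by omega
    rw [e1]
    exact add_lt_add_right (enum_lt B (by omega) (by omega)) _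
  · omega
  · omega
  · have e1 : t + 1 - 1 = t := by omega
    rw [e1]
    exact add_lt_add_left (enum_lt A (by omega) (by omega)) _
  · -- t = A.card
    have e1 : t - 1 = A.card - 1 := by omega
    have e2 : t + 1 - A.card + 1 = 2 := by omega
    rw [e1, e2]
    exact add_lt_add_right (enum_lt B (by omega) (by omega)) _
  · omega
  · omega
  · exact add_lt_add_right (enum_lt B (by omega) (by omega)) _

lemma chain_strictMono (A B : Finset ℤ) (h1 : 2 ≤ A.card) (h2 : 2 ≤ B.card) {j : ℕ}
    (hj : j ≤ A.card - 1) :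
    StrictMono (fun t : Fin (A.card + B.card - 1) => chain A B j t.val) :=
  strictMono_of_lt_succ (fun t ht => chain_lt A B h1 h2 hj ht)

lemma card_lower (A B : Finset ℤ) (h1 : 2 ≤ A.card) (h2 : 2 ≤ B.card) :
    A.card + B.card - 1 ≤ (A + B).card := by
  classical
  set n := A.card + B.card - 1 with hn
  have hA : A.Nonempty := Finset.card_pos.mp (by omega)
  have hB : B.Nonempty := Finset.card_pos.mp (by omega)
  set f : Fin n → ℤ := fun t => chain A B (A.card - 1) t.val with hf
  have hmono : StrictMono f := chain_strictMono A B h1 h2 (le_refl _)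
  have hsub : Finset.univ.image f ⊆ A + B := by
    intro x hx
    obtain ⟨t, _, rfl⟩ := Finset.mem_image.mp hx
    exact chain_mem A B hA hB _ _
  calc n = (Finset.univ.image f).card := by
        rw [Finset.card_image_of_injective _ hmono.injective, Finset.card_univ,
          Fintype.card_fin]
    _ ≤ (A + B).card := Finset.card_le_card hsub

lemma key (A B : Finset ℤ) (h1 : 2 ≤ A.card) (h2 : 2 ≤ B.card)
    (hc : (A + B).card = A.card + B.card - 1) {i : ℕ} (hi : i + 1 ≤ A.card - 1) :
    enum A (i + 1) + enum B 0 = enum A i + enum B 1 := by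
  classical
  have hA : A.Nonempty := Finset.card_pos.mp (by omega)
  have hB : B.Nonempty := Finset.card_pos.mp (by omega)
  set n := A.card + B.card - 1 with hn
  have hf := Finset.orderEmbOfFin_unique hc
    (f := fun t : Fin n => chain A B i t.val)
    (fun t => chain_mem A B hA hB i t.val) (chain_strictMono A B h1 h2 (by omega))
  have hg := Finset.orderEmbOfFin_unique hc
    (f := fun t : Fin n => chain A B (i + 1) t.val)
    (fun t => chain_mem A B hA hB (i + 1) t.val) (chain_strictMono A B h1 h2 (by omega))
  have heq : chain A B i (i + 1) = chain A B (i + 1) (i + 1) := by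
    have := congrFun (hf.trans hg.symm) ⟨i + 1, by omega⟩
    simpa using this
  unfold chain at heq
  rw [if_neg (by omega), if_pos (by omega), if_pos (le_refl _)] at heq
  have e1 : i + 1 - 1 = i := by omega
  rw [e1] at heq
  exact heq.symm

lemma eq_AP (A : Finset ℤ) (h1 : 2 ≤ A.card) (m : ℤ)
    (hstep : ∀ i, i + 1 ≤ A.card - 1 → enum A (i + 1) = enum A i + m) :
    A = AP (enum A 0) m A.card := by
  have hA : A.Nonempty := Finset.card_pos.mp (by omega)
  have hval : ∀ i, i ≤ A.card - 1 → enum A i = enum A 0 + (i : ℤ) * m := by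
    intro i
    induction i with
    | zero => intro _; simp
    | succ i ih =>
      intro hi
      rw [hstep i (by omega), ih (by omega)]
      push_cast
      ring
  have hsub : A ⊆ AP (enum A 0) m A.card := by
    intro x hx
    obtain ⟨i, hi, rfl⟩ := enum_surj A hA hx
    rw [AP, Finset.mem_image]
    exact ⟨i, Finset.mem_range.mpr (by omega), (hval i hi).symm⟩
  have hcard : (AP (enum A 0) m A.card).card ≤ A.card := by
    rw [AP]
    calc ((Finset.range A.card).image _).card ≤ (Finset.range A.card).card :=
          Finset.card_image_le
      _ = A.card := Finset.card_range _
  exact Finset.eq_of_subset_of_card_le hsub hcard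

end FreimanAux

/-- If two finite sets of integers, each with at least two elements, have Minkowski sum of
cardinality less than `|J₋| + |J₊|`, then both are arithmetic progressions with the same
common difference, and the Minkowski sum has cardinality exactly `|J₋| + |J₊| - 1`. -/
theorem freiman_type_arithmetic_progressions (J₁ J₂ : Finset ℤ)
    (h1 : 2 ≤ J₁.card) (h2 : 2 ≤ J₂.card)
    (h : (J₁ + J₂).card < J₁.card + J₂.card) :
    ∃ m : ℤ, 0 < m ∧ (∃ a, J₁ = AP a m J₁.card) ∧ (∃ b, J₂ = AP b m J₂.card) ∧
      (J₁ + J₂).card = J₁.card + J₂.card - 1 := by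
  classical
  open FreimanAux in
  have hge := FreimanAux.card_lower J₁ J₂ h1 h2
  have hc : (J₁ + J₂).card = J₁.card + J₂.card - 1 := by omega
  have hcomm : J₂ + J₁ = J₁ + J₂ := add_comm _ _
  have hc' : (J₂ + J₁).card = J₂.card + J₁.card - 1 := by rw [hcomm]; omega
  set m : ℤ := FreimanAux.enum J₂ 1 - FreimanAux.enum J₂ 0 with hm
  have hmpos : 0 < m := by
    have := FreimanAux.enum_lt J₂ (show 0 < 1 by omega) (by omega)
    omega
  have stepA : ∀ i, i + 1 ≤ J₁.card - 1 →
      FreimanAux.enum J₁ (i + 1) = FreimanAux.enum J₁ i + m := by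
    intro i hi
    have := FreimanAux.key J₁ J₂ h1 h2 hc hi
    omega
  have hm' : FreimanAux.enum J₁ 1 - FreimanAux.enum J₁ 0 = m := by
    have h0 := stepA 0 (by omega)
    norm_num at h0
    omega
  have stepB : ∀ j, j + 1 ≤ J₂.card - 1 →
      FreimanAux.enum J₂ (j + 1) = FreimanAux.enum J₂ j + m := by
    intro j hj
    have := FreimanAux.key J₂ J₁ h2 h1 hc' hj
    omega
  exact ⟨m, hmpos, ⟨FreimanAux.enum J₁ 0, FreimanAux.eq_AP J₁ h1 m stepA⟩,
    ⟨FreimanAux.enum J₂ 0, FreimanAux.eq_AP J₂ h2 m stepB⟩, hc⟩
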